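/- Let $\Pi_t$ be a Poisson random variable with mean $\delta t$ (where $\delta, t > 0$) and let $a \in (0,1)$. Then $\delta^2 \cdot \mathbb{E}\left[\frac{t^2}{(\Pi_t+1)(\Pi_t+2)} \sum_{n_1+n_2 \leq \Pi_t} a^{n_1+n_2}\right] = \frac{1}{(1-a)^2} - \left(\frac{1}{(1-a)^2} + \frac{\delta t}{1-a}\right) e^{-(1-a)\delta t}$. -/

import Mathlib

open Finset

lemma expHasSum (x : ℝ) : HasSum (fun n : ℕ => x ^ n / n.factorial) (Real.exp x) := by
  rw [Real.exp_eq_exp_ℝ]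
  exact NormedSpace.expSeries_div_hasSum_exp x

lemma geomDouble (a : ℝ) (ha1 : a ≠ 1) (n : ℕ) :
    ∑ n₁ ∈ Finset.range (n + 1), ∑ n₂ ∈ Finset.range (n + 1 - n₁), a ^ (n₁ + n₂)
      = ((n + 1 : ℝ) * a ^ (n + 1) * (a - 1) - a ^ (n + 1) + 1) / (a - 1) ^ 2 := by
  have ha : a - 1 ≠ 0 := sub_ne_zero.mpr ha1
  have h1 : ∀ n₁ ∈ Finset.range (n + 1),
      ∑ n₂ ∈ Finset.range (n + 1 - n₁), a ^ (n₁ + n₂)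
        = (a ^ (n + 1) - a ^ n₁) / (a - 1) := by
    intro n₁ hn₁
    rw [Finset.mem_range] at hn₁
    have : ∀ n₂ ∈ Finset.range (n + 1 - n₁), a ^ (n₁ + n₂) = a ^ n₁ * a ^ n₂ := by
      intro n₂ _; rw [pow_add]
    rw [Finset.sum_congr rfl this, ← Finset.mul_sum, geom_sum_eq ha1]
    have hle : n₁ ≤ n + 1 := le_of_lt (by omega)
    have : a ^ n₁ * a ^ (n + 1 - n₁) = a ^ (n + 1) := by
      rw [← pow_add, Nat.add_sub_cancel' hle]
    field_simp
    rw [mul_sub, this, mul_one]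
  rw [Finset.sum_congr rfl h1, ← Finset.sum_div, Finset.sum_sub_distrib,
    Finset.sum_const, Finset.card_range, geom_sum_eq ha1]
  field_simp
  ring

theorem stmt_8 (δ t a : ℝ) (hδ : 0 < δ) (ht : 0 < t) (ha : a ∈ Set.Ioo (0 : ℝ) 1) :
    δ ^ 2 * ∑' n : ℕ, (δ * t) ^ n / n.factorial * Real.exp (-(δ * t))
        * (t ^ 2 / ((n + 1) * (n + 2))
            * ∑ n₁ ∈ Finset.range (n + 1), ∑ n₂ ∈ Finset.range (n + 1 - n₁),
                a ^ (n₁ + n₂))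
      = 1 / (1 - a) ^ 2
        - (1 / (1 - a) ^ 2 + δ * t / (1 - a)) * Real.exp (-(1 - a) * (δ * t)) := by
  obtain ⟨ha0, ha1⟩ := ha
  have ha1' : a ≠ 1 := ne_of_lt ha1
  have has : a - 1 ≠ 0 := sub_ne_zero.mpr ha1'
  set x := δ * t with hx
  -- the key series
  set g : ℕ → ℝ := fun m => x ^ m / m.factorial with hg
  set h : ℕ → ℝ := fun m => (a * x) ^ m / m.factorial with hh
  set f : ℕ → ℝ := fun n =>
    x ^ (n + 2) / (n + 2).factorial * ((n + 1 : ℝ) * a ^ (n + 1) * (a - 1) - a ^ (n + 1) + 1)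
    with hf
  -- pointwise decomposition of f
  have hdecomp : ∀ n : ℕ, f n = g (n + 2) + (a - 1) * x * h (n + 1) - h (n + 2) := by
    intro n
    have hfac1 : ((n + 1).factorial : ℝ) = (n.factorial : ℝ) * (n + 1) := by
      rw [Nat.factorial_succ]; push_cast; ring
    have hfac2 : ((n + 2).factorial : ℝ) = ((n + 1).factorial : ℝ) * (n + 2) := by
      rw [show n + 2 = (n + 1) + 1 from rfl, Nat.factorial_succ]; push_cast; ring
    have hn0 : (n.factorial : ℝ) ≠ 0 := Nat.cast_ne_zero.mpr n.factorial_ne_zero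
    have hn1 : ((n : ℝ) + 1) ≠ 0 := by positivity
    have hn2 : ((n : ℝ) + 2) ≠ 0 := by positivity
    simp only [hf, hg, hh, hfac2, hfac1, mul_pow]
    field_simp
    ring
  -- HasSum facts
  have hgsum : HasSum g (Real.exp x) := expHasSum x
  have hhsum : HasSum h (Real.exp (a * x)) := expHasSum (a * x)
  have hg2 : HasSum (fun n => g (n + 2)) (Real.exp x - (1 + x)) := by
    have := (hasSum_nat_add_iff' (f := g) 2).mpr hgsum
    convert this using 1
    · rfl
    simp [hg, Finset.sum_range_succ, Nat.factorial]
  have hh1 : HasSum (fun n => h (n + 1)) (Real.exp (a * x) - 1) := by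
    have := (hasSum_nat_add_iff' (f := h) 1).mpr hhsum
    convert this using 1
    · rfl
    simp [hh]
  have hh2 : HasSum (fun n => h (n + 2)) (Real.exp (a * x) - (1 + a * x)) := by
    have := (hasSum_nat_add_iff' (f := h) 2).mpr hhsum
    convert this using 1
    · rfl
    simp [hh, Finset.sum_range_succ, Nat.factorial]
  have hfsum : HasSum f ((Real.exp x - (1 + x)) + (a - 1) * x * (Real.exp (a * x) - 1)
      - (Real.exp (a * x) - (1 + a * x))) := by
    have := (hg2.add (hh1.mul_left ((a - 1) * x))).sub hh2
    exact this.congr_fun fun n => hdecomp n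
  -- rewrite the LHS tsum
  have hterm : ∀ n : ℕ,
      δ ^ 2 * (x ^ n / n.factorial * Real.exp (-x)
        * (t ^ 2 / ((n + 1) * (n + 2))
            * ∑ n₁ ∈ Finset.range (n + 1), ∑ n₂ ∈ Finset.range (n + 1 - n₁), a ^ (n₁ + n₂)))
      = Real.exp (-x) / (a - 1) ^ 2 * f n := by
    intro n
    rw [geomDouble a ha1' n]
    have hfac1 : ((n + 1).factorial : ℝ) = (n.factorial : ℝ) * (n + 1) := by
      rw [Nat.factorial_succ]; push_cast; ring
    have hfac2 : ((n + 2).factorial : ℝ) = ((n + 1).factorial : ℝ) * (n + 2) := by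
      rw [show n + 2 = (n + 1) + 1 from rfl, Nat.factorial_succ]; push_cast; ring
    have hn0 : (n.factorial : ℝ) ≠ 0 := Nat.cast_ne_zero.mpr n.factorial_ne_zero
    have hn1 : ((n : ℝ) + 1) ≠ 0 := by positivity
    have hn2 : ((n : ℝ) + 2) ≠ 0 := by positivity
    have hxp : x ^ (n + 2) = δ ^ 2 * t ^ 2 * x ^ n := by
      rw [hx]; ring
    simp only [hf, hfac2, hfac1, hxp]
    field_simp
  calc δ ^ 2 * ∑' n : ℕ, x ^ n / n.factorial * Real.exp (-x)
        * (t ^ 2 / ((n + 1) * (n + 2))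
            * ∑ n₁ ∈ Finset.range (n + 1), ∑ n₂ ∈ Finset.range (n + 1 - n₁), a ^ (n₁ + n₂))
      = ∑' n : ℕ, Real.exp (-x) / (a - 1) ^ 2 * f n := by
        rw [← tsum_mul_left]
        exact tsum_congr hterm
    _ = Real.exp (-x) / (a - 1) ^ 2 * ((Real.exp x - (1 + x))
          + (a - 1) * x * (Real.exp (a * x) - 1) - (Real.exp (a * x) - (1 + a * x))) := by
        rw [tsum_mul_left, hfsum.tsum_eq]
    _ = 1 / (1 - a) ^ 2 - (1 / (1 - a) ^ 2 + x / (1 - a)) * Real.exp (-(1 - a) * x) := by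
        have e1 : Real.exp (-x) * Real.exp x = 1 := by
          rw [← Real.exp_add]; simp
        have e2 : Real.exp (-x) * Real.exp (a * x) = Real.exp (-(1 - a) * x) := by
          rw [← Real.exp_add]; ring_nf
        have h1a : (1 : ℝ) - a ≠ 0 := sub_ne_zero.mpr (ne_of_gt (by linarith))
        have key : Real.exp (-x) * ((Real.exp x - (1 + x))
            + (a - 1) * x * (Real.exp (a * x) - 1) - (Real.exp (a * x) - (1 + a * x)))
            = 1 - (1 + (1 - a) * x) * Real.exp (-(1 - a) * x) := by
          linear_combination e1 + ((a - 1) * x - 1) * e2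
        rw [div_mul_eq_mul_div, key]
        field_simp
        ring
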